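/- Let f : D → ℂ be holomorphic on a neighborhood of the closed disk of radius R centered at z₀, with f(z₀) ≠ 0. Then for any r < R, the number of zeros of f in the closed disk of radius r centered at z₀ (counted with multiplicity) is at most (log(M/|f(z₀)|))/(log(R/r)), where M = sup_{|z−z₀|=R} |f(z)|. -/

import Mathlib

open Metric Complex

private lemma ms_norm_prod (m : Multiset ℂ) : ‖m.prod‖ = (m.map (fun z => ‖z‖)).prod := by
  induction m using Multiset.induction with
  | empty => simp
  | cons a t ih => simp [Multiset.prod_cons, ih]

private lemma ms_prod_le_pow (m : Multiset ℝ) (r : ℝ) (hr : 0 ≤ r)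
    (h : ∀ x ∈ m, 0 ≤ x ∧ x ≤ r) : m.prod ≤ r ^ Multiset.card m := by
  induction m using Multiset.induction with
  | empty => simp
  | cons a t ih =>
      simp only [Multiset.prod_cons, Multiset.card_cons, pow_succ]
      have ha := h a (Multiset.mem_cons_self a t)
      have ht : t.prod ≤ r ^ Multiset.card t := ih fun x hx => h x (Multiset.mem_cons_of_mem hx)
      have htnn : 0 ≤ t.prod := Multiset.prod_nonneg fun x hx => (h x (Multiset.mem_cons_of_mem hx)).1
      calc a * t.prod ≤ r * t.prod := mul_le_mul_of_nonneg_right ha.2 htnn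
        _ ≤ r * r ^ Multiset.card t := mul_le_mul_of_nonneg_left ht hr
        _ = r ^ Multiset.card t * r := mul_comm _ _

private lemma ms_diff (m : Multiset ℂ) (F : ℂ → ℂ → ℂ) (h : ∀ a ∈ m, Differentiable ℂ (F a)) :
    Differentiable ℂ (fun z => (m.map (fun a => F a z)).prod) := by
  induction m using Multiset.induction with
  | empty => simpa using differentiable_const (1 : ℂ)
  | cons a t ih =>
      simp only [Multiset.map_cons, Multiset.prod_cons]
      exact (h a (Multiset.mem_cons_self a t)).mul
        (ih fun x hx => h x (Multiset.mem_cons_of_mem hx))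

theorem stmt_6 (f g : ℂ → ℂ) (z₀ : ℂ) (R r M : ℝ) (hr : 0 < r) (hrR : r < R)
    (U : Set ℂ) (hU : IsOpen U) (hRU : closedBall z₀ R ⊆ U)
    (hf : DifferentiableOn ℂ f U) (hg : DifferentiableOn ℂ g U)
    (s : Multiset ℂ) (hs : ∀ a ∈ s, a ∈ closedBall z₀ r)
    (hfac : ∀ z ∈ U, f z = g z * (s.map (fun a => z - a)).prod)
    (h0 : f z₀ ≠ 0)
    (hM : ∀ z ∈ sphere z₀ R, ‖f z‖ ≤ M) :
    (Multiset.card s : ℝ) ≤ Real.log (M / ‖f z₀‖) / Real.log (R / r) := by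
  have hR : 0 < R := hr.trans hrR
  set n := Multiset.card s with hn
  -- the auxiliary function
  set F : ℂ → ℂ → ℂ := fun a z => ((R : ℂ) ^ 2 - (starRingEnd ℂ) (a - z₀) * (z - z₀)) / R with hF
  set h : ℂ → ℂ := fun z => g z * (s.map (fun a => F a z)).prod with hh
  have hRne : (R : ℂ) ≠ 0 := by exact_mod_cast hR.ne'
  -- h is differentiable on U
  have hdiff : DifferentiableOn ℂ h U := by
    apply hg.mul
    exact (ms_diff s F fun a _ => by
      simp only [hF]
      exact (((differentiable_const _).sub
        ((differentiable_const _).mul (differentiable_id.sub (differentiable_const _)))).div_const _)).differentiableOn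
  -- on the sphere, ‖h z‖ = ‖f z‖
  have hsphere : ∀ z ∈ sphere z₀ R, ‖h z‖ ≤ M := by
    intro z hz
    have hzU : z ∈ U := hRU (sphere_subset_closedBall hz)
    have hznorm : ‖z - z₀‖ = R := by simpa [dist_eq_norm] using hz
    have hfactor : ∀ a : ℂ, ‖F a z‖ = ‖z - a‖ := by
      intro a
      have key : (R : ℂ) ^ 2 - (starRingEnd ℂ) (a - z₀) * (z - z₀)
          = (z - z₀) * (starRingEnd ℂ) (z - a) := by
        have h1 : (z - z₀) * (starRingEnd ℂ) (z - z₀) = (R : ℂ) ^ 2 := by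
          rw [Complex.mul_conj, Complex.normSq_eq_norm_sq, hznorm]
          push_cast; ring
        calc (R : ℂ) ^ 2 - (starRingEnd ℂ) (a - z₀) * (z - z₀)
            = (z - z₀) * (starRingEnd ℂ) (z - z₀) - (z - z₀) * (starRingEnd ℂ) (a - z₀) := by
              rw [h1]; ring
          _ = (z - z₀) * (starRingEnd ℂ) (z - a) := by
              rw [← mul_sub, ← map_sub]; ring_nf
      rw [hF]
      simp only [key, norm_div, norm_mul]
      rw [RCLike.norm_conj, hznorm]
      simp [abs_of_pos hR]
      field_simp
    have : ‖h z‖ = ‖f z‖ := by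
      rw [hh, hfac z hzU, norm_mul, norm_mul, ms_norm_prod, ms_norm_prod]
      congr 1
      rw [Multiset.map_map, Multiset.map_map]
      exact congrArg Multiset.prod (Multiset.map_congr rfl (fun a _ => hfactor a))
    rw [this]; exact hM z hz
  -- max modulus principle: ‖h z₀‖ ≤ M
  have hsub : closure (ball z₀ R) ⊆ U := by
    rw [closure_ball z₀ hR.ne']; exact hRU
  have hmax : ‖h z₀‖ ≤ M :=
    Complex.norm_le_of_forall_mem_frontier_norm_le isBounded_ball
      ((hdiff.mono hsub).diffContOnCl)
      (by rw [frontier_ball z₀ hR.ne']; exact hsphere)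
      (by rw [closure_ball z₀ hR.ne']; exact mem_closedBall_self hR.le)
  -- compute ‖h z₀‖ and compare with ‖f z₀‖
  have hz₀U : z₀ ∈ U := hRU (mem_closedBall_self hR.le)
  have hFz₀ : ∀ a : ℂ, F a z₀ = (R : ℂ) := by
    intro a; simp only [hF, sub_self, mul_zero, sub_zero]; rw [sq, mul_div_assoc, div_self hRne, mul_one]
  have hhz₀ : ‖h z₀‖ = ‖g z₀‖ * R ^ n := by
    rw [hh]
    simp only
    rw [norm_mul, ms_norm_prod, Multiset.map_map]
    congr 1
    have : Multiset.map ((fun z => ‖z‖) ∘ fun a => F a z₀) s = Multiset.map (fun _ => R) s :=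
      Multiset.map_congr rfl (fun a _ => by simp [hFz₀ a, abs_of_pos hR])
    rw [this, Multiset.map_const', Multiset.prod_replicate, hn]
  have hfz₀ : ‖f z₀‖ ≤ ‖g z₀‖ * r ^ n := by
    rw [hfac z₀ hz₀U, norm_mul, ms_norm_prod, Multiset.map_map]
    refine mul_le_mul_of_nonneg_left ?_ (norm_nonneg _)
    have := ms_prod_le_pow (Multiset.map ((fun z => ‖z‖) ∘ fun a => z₀ - a) s) r hr.le ?_
    · simpa [hn] using this
    · intro x hx
      obtain ⟨a, ha, rfl⟩ := Multiset.mem_map.1 hx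
      refine ⟨norm_nonneg _, ?_⟩
      have := hs a ha
      rw [mem_closedBall, dist_comm] at this
      simpa [dist_eq_norm] using this
  -- combine
  have hfpos : 0 < ‖f z₀‖ := norm_pos_iff.2 h0
  have key : ‖f z₀‖ * (R / r) ^ n ≤ M := by
    have h1 : ‖f z₀‖ * (R / r) ^ n ≤ ‖g z₀‖ * r ^ n * (R / r) ^ n :=
      mul_le_mul_of_nonneg_right hfz₀ (by positivity)
    have h2 : ‖g z₀‖ * r ^ n * (R / r) ^ n = ‖g z₀‖ * R ^ n := by
      rw [div_pow, mul_assoc, mul_div_assoc', mul_div_cancel_left₀ _ (pow_ne_zero n hr.ne')]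
    calc ‖f z₀‖ * (R / r) ^ n ≤ ‖g z₀‖ * R ^ n := by rw [← h2]; exact h1
      _ = ‖h z₀‖ := hhz₀.symm
      _ ≤ M := hmax
  have hRr1 : 1 < R / r := (one_lt_div hr).2 hrR
  have hlogpos : 0 < Real.log (R / r) := Real.log_pos hRr1
  rw [le_div_iff₀ hlogpos]
  have hpow : (R / r) ^ n ≤ M / ‖f z₀‖ := (le_div_iff₀ hfpos).2 (by linarith [key])
  calc (n : ℝ) * Real.log (R / r) = Real.log ((R / r) ^ n) := by rw [Real.log_pow]
    _ ≤ Real.log (M / ‖f z₀‖) := Real.log_le_log (by positivity : (0:ℝ) < (R/r)^n) hpow
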